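/- Let T₁ and T₂ be binary trees with leaf-label sets admitting non-trivial bipartitions (Y₁,Z₁) and (Y₂,Z₂), with splitting cores C₁ and C₂ each satisfying ∑_{K∈Cᵢ} 2^{-|K|} ≤ 1/2. If e₁, e₂ are two distinct edges not in T₁ or T₂, then the set C = {K ∪ {e₁} : K ∈ C₁} ∪ {K ∪ {e₂} : K ∈ C₂} satisfies ∑_{K∈C} 2^{-|K|} ≤ 1/2. -/
import Mathlib


open Classical in
/-- Inductive weight computation for splitting cores: if `C₁, C₂` are sets of cuts
(of edges of trees `T₁`, `T₂` with edge sets `E₁`, `E₂`) each of total weight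
`∑ 2^(-|K|) ≤ 1/2`, and `e₁ ≠ e₂` are edges belonging to neither tree, then
`C = {K ∪ {e₁} : K ∈ C₁} ∪ {K ∪ {e₂} : K ∈ C₂}` has total weight `≤ 1/2`. -/
theorem splitting_core_weight {α : Type*} (E₁ E₂ : Set α)
    (C₁ C₂ : Finset (Finset α))
    (hC₁ : ∀ K ∈ C₁, (K : Set α) ⊆ E₁) (hC₂ : ∀ K ∈ C₂, (K : Set α) ⊆ E₂)
    (e₁ e₂ : α) (hne : e₁ ≠ e₂)
    (he₁ : e₁ ∉ E₁ ∪ E₂) (he₂ : e₂ ∉ E₁ ∪ E₂)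
    (hw₁ : ∑ K ∈ C₁, (2 : ℝ) ^ (-(K.card : ℤ)) ≤ 1 / 2)
    (hw₂ : ∑ K ∈ C₂, (2 : ℝ) ^ (-(K.card : ℤ)) ≤ 1 / 2) :
    ∑ K ∈ (C₁.image (insert e₁) ∪ C₂.image (insert e₂)),
      (2 : ℝ) ^ (-(K.card : ℤ)) ≤ 1 / 2 := by

  have he1E1 : e₁ ∉ E₁ := fun h => he₁ (Or.inl h)
  have he2E2 : e₂ ∉ E₂ := fun h => he₂ (Or.inr h)
  have h1 : ∀ K ∈ C₁, e₁ ∉ K := fun K hK h => he1E1 (hC₁ K hK h)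
  have h2 : ∀ K ∈ C₂, e₂ ∉ K := fun K hK h => he2E2 (hC₂ K hK h)
  have hdisj : Disjoint (C₁.image (insert e₁)) (C₂.image (insert e₂)) := by
    rw [Finset.disjoint_left]
    rintro A hA hB
    obtain ⟨K, hK, rfl⟩ := Finset.mem_image.mp hA
    obtain ⟨L, hL, hEq⟩ := Finset.mem_image.mp hB
    have : e₂ ∈ insert e₁ K := hEq ▸ Finset.mem_insert_self _ _
    rcases Finset.mem_insert.mp this with h | h
    · exact hne h.symm
    · exact he₂ (Or.inl (hC₁ K hK h))
  rw [Finset.sum_union hdisj,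
    Finset.sum_image (fun K hK L hL h => by
      have := Finset.erase_insert (h1 K hK)
      rw [← this, h, Finset.erase_insert (h1 L hL)]),
    Finset.sum_image (fun K hK L hL h => by
      have := Finset.erase_insert (h2 K hK)
      rw [← this, h, Finset.erase_insert (h2 L hL)])]
  have key : ∀ (e : α) (C : Finset (Finset α)), (∀ K ∈ C, e ∉ K) →
      ∑ K ∈ C, (2 : ℝ) ^ (-((insert e K).card : ℤ)) =
      (1/2) * ∑ K ∈ C, (2 : ℝ) ^ (-(K.card : ℤ)) := by
    intro e C hC
    rw [Finset.mul_sum]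
    refine Finset.sum_congr rfl fun K hK => ?_
    rw [Finset.card_insert_of_notMem (hC K hK)]
    push_cast
    rw [neg_add, zpow_add₀ (by norm_num : (2:ℝ) ≠ 0)]
    norm_num
    ring
  rw [key e₁ C₁ h1, key e₂ C₂ h2]
  nlinarith
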